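/- For integers A1, A2, B, C the identity (A1·x1^2 + B·x1·y1 + A2·C·y1^2)(A2·x2^2 + B·x2·y2 + A1·C·y2^2) = A1·A2·X^2 + B·X·Y + C·Y^2 holds, where X = x1·x2 - C·y1·y2 and Y = A1·x1·y2 + A2·x2·y1 + B·y1·y2. -/
import Mathlib


/-- Dirichlet's composition identity for concordant forms
(A1,B,A2·C) and (A2,B,A1·C). -/
theorem stmt_4 (A1 A2 B C x1 y1 x2 y2 : ℤ) :
    (A1 * x1 ^ 2 + B * x1 * y1 + A2 * C * y1 ^ 2)
      * (A2 * x2 ^ 2 + B * x2 * y2 + A1 * C * y2 ^ 2)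
    = A1 * A2 * (x1 * x2 - C * y1 * y2) ^ 2
      + B * (x1 * x2 - C * y1 * y2)
          * (A1 * x1 * y2 + A2 * x2 * y1 + B * y1 * y2)
      + C * (A1 * x1 * y2 + A2 * x2 * y1 + B * y1 * y2) ^ 2 := by
  ring
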